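/- Mod-2 q-expansion of C (equation (3.2), from Lemma 2.2): For all natural numbers N ≥ 1 and all m with 1 ≤ m ≤ 3N, the coefficient of X^m in the polynomial X · ∏_{n=1}^{N} (1 − X^{3n})^{8} over ZMod 2 equals 1 if and only if m = k² for some odd natural number k not divisible by 3. -/

import Mathlib

open Polynomial

namespace CMod2

open Finset


/-- Gauss summation over an interval. -/
lemma gauss (a b : ℕ) (h : a ≤ b + 1) :
    (∑ i ∈ Icc a b, i) * 2 + a * (a - 1) = (b + 1) * b := by
  have h0 : (∑ i ∈ Finset.range a, i) + (∑ i ∈ Icc a b, i)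
      = ∑ i ∈ Finset.range (b+1), i := by
    rw [← Finset.Ico_add_one_right_eq_Icc]
    rw [Finset.range_eq_Ico, Finset.range_eq_Ico]
    exact Finset.sum_Ico_consecutive (fun i : ℕ => i) (Nat.zero_le a) h
  have g1 := Finset.sum_range_id_mul_two a
  have g2 := Finset.sum_range_id_mul_two (b+1)
  simp only [Nat.add_sub_cancel] at g2
  obtain ⟨p, hp⟩ : ∃ p, a * (a-1) = p := ⟨_, rfl⟩
  obtain ⟨q, hq⟩ : ∃ q, (b+1) * b = q := ⟨_, rfl⟩
  rw [hp] at g1 ⊢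
  rw [hq] at g2 ⊢
  omega

lemma sumE1 (j : ℕ) : 24 * (∑ i ∈ Icc (j+1) (2*j+1), i) + 1 = (6*j+5)^2 := by
  have h := gauss (j+1) (2*j+1) (by omega)
  simp only [Nat.add_sub_cancel] at h
  zify at h ⊢
  linear_combination (12:ℤ) * h

lemma sumE2 (j : ℕ) : 24 * (∑ i ∈ Icc (j+1) (2*j), i) + 1 = (6*j+1)^2 := by
  have h := gauss (j+1) (2*j) (by omega)
  simp only [Nat.add_sub_cancel] at h
  zify at h ⊢
  linear_combination (12:ℤ) * h

lemma pow8 (a : ℕ) : ((1 : (ZMod 2)[X]) - X ^ a) ^ 8 = 1 + X ^ (8 * a) := by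
  have key : ∀ b : ℕ, ((1 : (ZMod 2)[X]) + X ^ b) ^ 2 = 1 + X ^ (2 * b) := by
    intro b
    rw [add_pow_char, one_pow, ← pow_mul, mul_comm]
  rw [CharTwo.sub_eq_add]
  calc ((1 : (ZMod 2)[X]) + X ^ a) ^ 8 = (((1 + X ^ a) ^ 2) ^ 2) ^ 2 := by ring
  _ = 1 + X ^ (8 * a) := by rw [key, key, key]; ring_nf



def frank (A : Finset ℕ) : Finset ℕ :=
  if hA : A.Nonempty then
    if A.min' hA ≤ A.max' hA - Nat.findGreatest (fun x => x ∉ A) (A.max' hA) then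
      insert (A.max' hA + 1)
        ((A.erase (A.min' hA)).erase (A.max' hA - A.min' hA + 1))
    else
      insert (A.max' hA - Nat.findGreatest (fun x => x ∉ A) (A.max' hA))
        (insert (Nat.findGreatest (fun x => x ∉ A) (A.max' hA)) (A.erase (A.max' hA)))
  else ∅

def Exc (A : Finset ℕ) : Prop :=
  ∃ j : ℕ, A = Icc (j + 1) (2 * j + 1) ∨ A = Icc (j + 1) (2 * j)

lemma frank_of_nonempty {A : Finset ℕ} (hA : A.Nonempty) :
    frank A =
      if A.min' hA ≤ A.max' hA - Nat.findGreatest (fun x => x ∉ A) (A.max' hA) then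
        insert (A.max' hA + 1)
          ((A.erase (A.min' hA)).erase (A.max' hA - A.min' hA + 1))
      else
        insert (A.max' hA - Nat.findGreatest (fun x => x ∉ A) (A.max' hA))
          (insert (Nat.findGreatest (fun x => x ∉ A) (A.max' hA)) (A.erase (A.max' hA))) :=
  dif_pos hA

set_option maxHeartbeats 1000000 in
lemma frank_spec {N : ℕ} {A : Finset ℕ} (hsub : A ⊆ Icc 1 N)
    (hsum : (∑ i ∈ A, i) ≤ N) (hexc : ¬ Exc A) :
    frank A ⊆ Icc 1 N ∧ (∑ i ∈ frank A, i) = ∑ i ∈ A, i ∧ ¬ Exc (frank A) ∧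
      frank (frank A) = A ∧ frank A ≠ A := by
  classical
  have hA : A.Nonempty := by
    rcases A.eq_empty_or_nonempty with h | h
    · exact absurd ⟨0, Or.inr (by rw [h]; exact (Finset.Icc_eq_empty (by norm_num)).symm)⟩ hexc
    · exact h
  have e := frank_of_nonempty hA
  set M := A.max' hA with hM_def
  set m := A.min' hA with hm_def
  set g := Nat.findGreatest (fun x => x ∉ A) M with hg_def
  have hMA : M ∈ A := A.max'_mem hA
  have hmA : m ∈ A := A.min'_mem hA
  have hle : ∀ x ∈ A, x ≤ M := fun x hx => A.le_max' x hx
  have hge : ∀ x ∈ A, m ≤ x := fun x hx => A.min'_le x hx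
  have hIcc : ∀ x ∈ A, 1 ≤ x ∧ x ≤ N := fun x hx => mem_Icc.1 (hsub hx)
  have h1m : 1 ≤ m := (hIcc m hmA).1
  have hMN : M ≤ N := (hIcc M hMA).2
  have hmM : m ≤ M := hge M hMA
  have h0A : (0 : ℕ) ∉ A := fun h => by have := (hIcc 0 h).1; omega
  have hgA : g ∉ A := by
    rw [hg_def]
    exact Nat.findGreatest_spec (P := fun x => x ∉ A) (Nat.zero_le M) h0A
  have hgleM : g ≤ M := by
    rw [hg_def]; exact Nat.findGreatest_le M
  have hgM : g < M := lt_of_le_of_ne hgleM fun h => hgA (h ▸ hMA)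
  have hrun : ∀ x, g < x → x ≤ M → x ∈ A := by
    intro x h1 h2
    by_contra hx
    rw [hg_def] at h1
    exact Nat.findGreatest_is_greatest h1 h2 hx
  have hsumM : M ≤ ∑ i ∈ A, i := Finset.single_le_sum (fun i _ => Nat.zero_le i) hMA
  have hm1A : m - 1 ∉ A := fun h => by have := hge _ h; omega
  have hrunA : g < m → A = Icc m M := fun hgm =>
    Finset.ext fun x =>
      ⟨fun hx => mem_Icc.2 ⟨hge x hx, hle x hx⟩,
       fun hx => hrun x (lt_of_lt_of_le hgm (mem_Icc.1 hx).1) (mem_Icc.1 hx).2⟩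
  have hgm1 : g < m → g = m - 1 := by
    intro hgm
    have hge' : ¬ (g < m - 1) := by
      intro hlt
      rw [hg_def] at hlt
      exact Nat.findGreatest_is_greatest hlt (by omega) hm1A
    omega
  by_cases hc : m ≤ M - g
  · -- Case 1: small part fits into the top run
    rw [if_pos hc] at e
    have hM2 : 2 * m ≤ M := by
      by_contra hlt
      push_neg at hlt
      have hgm : g < m := by omega
      have hAI := hrunA hgm
      have hg1 := hgm1 hgm
      exact hexc ⟨m - 1, Or.inl (by
        rw [hAI, show m - 1 + 1 = m from by omega, show 2 * (m - 1) + 1 = M from by omega])⟩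
    have hgMm : g ≤ M - m := by omega
    have hMm1A : M - m + 1 ∈ A := hrun _ (by omega) (by omega)
    have hne : m ≠ M - m + 1 := by omega
    have hM1A : M + 1 ∉ A := fun h => by have := hle _ h; omega
    set B := insert (M + 1) ((A.erase m).erase (M - m + 1)) with hBdef
    have hmemB : ∀ x, x ∈ B ↔ x = M + 1 ∨ (x ∈ A ∧ x ≠ m ∧ x ≠ M - m + 1) := by
      intro x
      simp only [hBdef, mem_insert, mem_erase]
      tauto
    have hMm1B : M - m + 1 ∉ B := by
      rw [hmemB]
      push_neg
      exact ⟨by omega, fun _ _ => rfl⟩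
    have hmem1 : M - m + 1 ∈ A.erase m := mem_erase.2 ⟨by omega, hMm1A⟩
    have hnm : M + 1 ∉ (A.erase m).erase (M - m + 1) := fun h =>
      hM1A (mem_of_mem_erase (mem_of_mem_erase h))
    -- sum
    have s1 : m + ∑ i ∈ A.erase m, i = ∑ i ∈ A, i := Finset.add_sum_erase _ (fun i => i) hmA
    have s2 : (M - m + 1) + ∑ i ∈ (A.erase m).erase (M - m + 1), i = ∑ i ∈ A.erase m, i :=
      Finset.add_sum_erase _ (fun i => i) hmem1
    have s3 : ∑ i ∈ B, i = (M + 1) + ∑ i ∈ (A.erase m).erase (M - m + 1), i :=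
      Finset.sum_insert hnm
    have hsumB : ∑ i ∈ B, i = ∑ i ∈ A, i := by omega
    -- pair bound
    have hpairsub : ({m, M - m + 1} : Finset ℕ) ⊆ A := by
      intro x hx
      simp only [mem_insert, mem_singleton] at hx
      rcases hx with rfl | rfl
      exacts [hmA, hMm1A]
    have hpair : m + (M - m + 1) ≤ ∑ i ∈ A, i := by
      calc m + (M - m + 1) = ∑ i ∈ ({m, M - m + 1} : Finset ℕ), i :=
            (Finset.sum_pair (f := fun i => i) hne).symm
        _ ≤ ∑ i ∈ A, i := Finset.sum_le_sum_of_subset hpairsub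
    have hM1N : M + 1 ≤ N := by omega
    have hBsub : B ⊆ Icc 1 N := by
      intro x hx
      rcases (hmemB x).1 hx with rfl | ⟨hxA, _, _⟩
      · exact mem_Icc.2 ⟨by omega, hM1N⟩
      · exact hsub hxA
    have hBne : B.Nonempty := ⟨M + 1, mem_insert_self _ _⟩
    have hBle : ∀ x ∈ B, x ≤ M + 1 := by
      intro x hx
      rcases (hmemB x).1 hx with rfl | ⟨hxA, _, _⟩
      · exact le_refl _
      · have := hle _ hxA; omega
    have hBge : ∀ x ∈ B, m + 1 ≤ x := by
      intro x hx
      rcases (hmemB x).1 hx with rfl | ⟨hxA, hxm, _⟩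
      · omega
      · have := hge _ hxA; omega
    have hBmax : B.max' hBne = M + 1 :=
      le_antisymm (Finset.max'_le _ _ _ hBle) (Finset.le_max' _ _ (mem_insert_self _ _))
    have hBminge : m + 1 ≤ B.min' hBne := Finset.le_min' _ _ _ hBge
    have hgB : Nat.findGreatest (fun x => x ∉ B) (M + 1) = M - m + 1 := by
      rw [Nat.findGreatest_eq_iff]
      refine ⟨by omega, fun _ => hMm1B, ?_⟩
      intro n h1 h2 hn
      apply hn
      rcases eq_or_lt_of_le h2 with rfl | h2'
      · exact mem_insert_self _ _
      · exact (hmemB n).2 (Or.inr ⟨hrun n (by omega) (by omega), by omega, by omega⟩)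
    have e2 := frank_of_nonempty hBne
    rw [hBmax, hgB, show M + 1 - (M - m + 1) = m from by omega] at e2
    rw [if_neg (by omega)] at e2
    have er1 : B.erase (M + 1) = (A.erase m).erase (M - m + 1) := Finset.erase_insert hnm
    have er2 : insert (M - m + 1) ((A.erase m).erase (M - m + 1)) = A.erase m :=
      Finset.insert_erase hmem1
    have hffA : frank B = A := by
      rw [e2, er1, er2, Finset.insert_erase hmA]
    have hExcB : ¬ Exc B := by
      rintro ⟨j, hj | hj⟩
      · have h1 : M + 1 ∈ Icc (j + 1) (2 * j + 1) := hj ▸ mem_insert_self _ _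
        rw [mem_Icc] at h1
        have h2 : (2 * j + 1 : ℕ) ∈ B := hj ▸ mem_Icc.2 ⟨by omega, le_refl _⟩
        have h2' := hBle _ h2
        have h3 : (j + 1 : ℕ) ∈ B := hj ▸ mem_Icc.2 ⟨le_refl _, by omega⟩
        have h3' := hBge _ h3
        have : M - m + 1 ∈ B := hj ▸ mem_Icc.2 ⟨by omega, by omega⟩
        exact hMm1B this
      · have h1 : M + 1 ∈ Icc (j + 1) (2 * j) := hj ▸ mem_insert_self _ _
        rw [mem_Icc] at h1
        have h2 : (2 * j : ℕ) ∈ B := hj ▸ mem_Icc.2 ⟨by omega, le_refl _⟩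
        have h2' := hBle _ h2
        have h3 : (j + 1 : ℕ) ∈ B := hj ▸ mem_Icc.2 ⟨le_refl _, by omega⟩
        have h3' := hBge _ h3
        have : M - m + 1 ∈ B := hj ▸ mem_Icc.2 ⟨by omega, by omega⟩
        exact hMm1B this
    refine ⟨e ▸ hBsub, e ▸ hsumB, e ▸ hExcB, ?_, ?_⟩
    · rw [e]; exact hffA
    · rw [e]; intro hEq; exact hM1A (hEq ▸ mem_insert_self (M + 1) _)
  · -- Case 2: small part exceeds the top run
    rw [if_neg hc] at e
    push_neg at hc
    have hg1 : 1 ≤ g := by omega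
    have hrg : M - g ≠ g := by
      intro hEq
      have hgm : g < m := by omega
      have hAI := hrunA hgm
      have hg1' := hgm1 hgm
      exact hexc ⟨m - 1, Or.inr (by
        rw [hAI, show m - 1 + 1 = m from by omega, show 2 * (m - 1) = M from by omega])⟩
    have hrltg : M - g < g := by
      rcases lt_trichotomy (M - g) g with h | h | h
      · exact h
      · exact absurd h hrg
      · exfalso
        have := hge _ (hrun (M - g) h (by omega))
        omega
    have hMgA : M - g ∉ A := fun h => by have := hge _ h; omega
    set B := insert (M - g) (insert g (A.erase M)) with hBdef
    have hmemB : ∀ x, x ∈ B ↔ x = M - g ∨ x = g ∨ (x ∈ A ∧ x ≠ M) := by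
      intro x
      simp only [hBdef, mem_insert, mem_erase]
      tauto
    have hn1 : M - g ∉ insert g (A.erase M) := by
      simp only [mem_insert, mem_erase]
      push_neg
      exact ⟨hrg, fun _ h => absurd h hMgA⟩
    have hn2 : g ∉ A.erase M := fun h => hgA (mem_of_mem_erase h)
    have s1 : M + ∑ i ∈ A.erase M, i = ∑ i ∈ A, i := Finset.add_sum_erase _ (fun i => i) hMA
    have s3 : ∑ i ∈ B, i = (M - g) + (g + ∑ i ∈ A.erase M, i) := by
      rw [hBdef, Finset.sum_insert hn1, Finset.sum_insert hn2]
    have hsumB : ∑ i ∈ B, i = ∑ i ∈ A, i := by omega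
    have hBsub : B ⊆ Icc 1 N := by
      intro x hx
      rcases (hmemB x).1 hx with rfl | rfl | ⟨hxA, _⟩
      · exact mem_Icc.2 ⟨by omega, by omega⟩
      · exact mem_Icc.2 ⟨by omega, by omega⟩
      · exact hsub hxA
    have hBne : B.Nonempty := ⟨M - g, mem_insert_self _ _⟩
    have hMB : M ∉ B := by
      rw [hmemB]
      push_neg
      exact ⟨by omega, by omega, fun _ => rfl⟩
    have hBle : ∀ x ∈ B, x ≤ M - 1 := by
      intro x hx
      rcases (hmemB x).1 hx with rfl | rfl | ⟨hxA, hxM⟩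
      · omega
      · omega
      · have := hle _ hxA; omega
    have hBge : ∀ x ∈ B, M - g ≤ x := by
      intro x hx
      rcases (hmemB x).1 hx with rfl | rfl | ⟨hxA, _⟩
      · exact le_refl _
      · omega
      · have := hge _ hxA; omega
    have hM1B : M - 1 ∈ B := by
      by_cases hgM1 : g = M - 1
      · exact (hmemB _).2 (Or.inr (Or.inl hgM1.symm))
      · exact (hmemB _).2 (Or.inr (Or.inr ⟨hrun (M - 1) (by omega) (by omega), by omega⟩))
    have hBmax : B.max' hBne = M - 1 :=
      le_antisymm (Finset.max'_le _ _ _ hBle) (Finset.le_max' _ _ hM1B)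
    have hBmin : B.min' hBne = M - g :=
      le_antisymm (Finset.min'_le _ _ (mem_insert_self _ _)) (Finset.le_min' _ _ _ hBge)
    have hrunB : ∀ x, g ≤ x → x ≤ M - 1 → x ∈ B := by
      intro x h1 h2
      rcases eq_or_lt_of_le h1 with rfl | h1'
      · exact (hmemB _).2 (Or.inr (Or.inl rfl))
      · exact (hmemB _).2 (Or.inr (Or.inr ⟨hrun x h1' (by omega), by omega⟩))
    have h0B : (0 : ℕ) ∉ B := fun h => by
      have := mem_Icc.1 (hBsub h); omega
    have hg'lt : Nat.findGreatest (fun x => x ∉ B) (M - 1) < g := by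
      by_contra h
      push_neg at h
      have hspec : Nat.findGreatest (fun x => x ∉ B) (M - 1) ∉ B :=
        Nat.findGreatest_spec (P := fun x => x ∉ B) (Nat.zero_le _) h0B
      exact hspec (hrunB _ h (Nat.findGreatest_le _))
    have e2 := frank_of_nonempty hBne
    rw [hBmax, hBmin] at e2
    rw [if_pos (by omega)] at e2
    rw [show M - 1 + 1 = M from by omega,
        show M - 1 - (M - g) + 1 = g from by omega] at e2
    have er1 : B.erase (M - g) = insert g (A.erase M) := Finset.erase_insert hn1
    have er2 : (insert g (A.erase M)).erase g = A.erase M := Finset.erase_insert hn2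
    have hffA : frank B = A := by
      rw [e2, er1, er2, Finset.insert_erase hMA]
    have hExcB : ¬ Exc B := by
      rintro ⟨j, hj | hj⟩
      · have h1 : M - g ∈ Icc (j + 1) (2 * j + 1) := hj ▸ mem_insert_self _ _
        rw [mem_Icc] at h1
        have h2 : (2 * j + 1 : ℕ) ∈ B := hj ▸ mem_Icc.2 ⟨by omega, le_refl _⟩
        have h2' := hBle _ h2
        have h3 : (j + 1 : ℕ) ∈ B := hj ▸ mem_Icc.2 ⟨le_refl _, by omega⟩
        have h3' := hBge _ h3
        have h4' := hBle _ hM1B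
        have h4'' : M - 1 ≤ 2 * j + 1 := by
          have : M - 1 ∈ Icc (j + 1) (2 * j + 1) := hj ▸ hM1B
          exact (mem_Icc.1 this).2
        omega
      · have h1 : M - g ∈ Icc (j + 1) (2 * j) := hj ▸ mem_insert_self _ _
        rw [mem_Icc] at h1
        have h3 : (j + 1 : ℕ) ∈ B := hj ▸ mem_Icc.2 ⟨le_refl _, by omega⟩
        have h3' := hBge _ h3
        have h4'' : M - 1 ≤ 2 * j := by
          have : M - 1 ∈ Icc (j + 1) (2 * j) := hj ▸ hM1B
          exact (mem_Icc.1 this).2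
        have h2 : (2 * j : ℕ) ∈ B := hj ▸ mem_Icc.2 ⟨by omega, le_refl _⟩
        have h2' := hBle _ h2
        omega
    refine ⟨e ▸ hBsub, e ▸ hsumB, e ▸ hExcB, ?_, ?_⟩
    · rw [e]; exact hffA
    · rw [e]; intro hEq; exact hMB (hEq.symm ▸ hMA)

lemma exc_eq_of_sum_eq {A B : Finset ℕ} (hA : Exc A) (hB : Exc B)
    (h : ∑ i ∈ A, i = ∑ i ∈ B, i) : A = B := by
  have pinj : ∀ a b : ℕ, a ^ 2 = b ^ 2 → a = b := fun a b h =>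
    Nat.pow_left_injective (by norm_num) h
  obtain ⟨i, hi⟩ := hA; obtain ⟨j, hj⟩ := hB
  rcases hi with rfl | rfl <;> rcases hj with rfl | rfl
  · have e1 := sumE1 i; have e2 := sumE1 j
    have := pinj (6*i+5) (6*j+5) (by omega)
    have : i = j := by omega
    rw [this]
  · exfalso
    have e1 := sumE1 i; have e2 := sumE2 j
    have := pinj (6*i+5) (6*j+1) (by omega)
    omega
  · exfalso
    have e1 := sumE2 i; have e2 := sumE1 j
    have := pinj (6*i+1) (6*j+5) (by omega)
    omega
  · have e1 := sumE2 i; have e2 := sumE2 j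
    have := pinj (6*i+1) (6*j+1) (by omega)
    have : i = j := by omega
    rw [this]

open scoped Classical in
lemma parity (N s : ℕ) (hsN : s ≤ N) :
    ((((Icc 1 N).powerset.filter (fun t => ∑ i ∈ t, i = s)).card : ℕ) : ZMod 2) =
      if ∃ j : ℕ, s = ∑ i ∈ Icc (j+1) (2*j+1), i ∨ s = ∑ i ∈ Icc (j+1) (2*j), i
      then 1 else 0 := by
  classical
  set F := (Icc 1 N).powerset.filter (fun t => ∑ i ∈ t, i = s) with hF
  have hFmem : ∀ A : Finset ℕ, A ∈ F ↔ A ⊆ Icc 1 N ∧ ∑ i ∈ A, i = s := by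
    intro A; rw [hF, mem_filter, mem_powerset]
  set F' := F.filter (fun A => ¬ Exc A) with hF'
  have key : ∀ A ∈ F', frank A ∈ F' ∧ frank (frank A) = A ∧ frank A ≠ A := by
    intro A hA
    rw [hF', mem_filter] at hA
    obtain ⟨hAF, hAexc⟩ := hA
    rw [hFmem] at hAF
    obtain ⟨h1, h2, h3, h4, h5⟩ := frank_spec hAF.1 (by rw [hAF.2]; exact hsN) hAexc
    refine ⟨?_, h4, h5⟩
    rw [hF', mem_filter, hFmem]
    exact ⟨⟨h1, by rw [h2, hAF.2]⟩, h3⟩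
  have hsum0 : ∑ _A ∈ F', (1 : ZMod 2) = 0 :=
    Finset.sum_involution (fun A _ => frank A)
      (fun A ha => by decide)
      (fun A ha _ => (key A ha).2.2)
      (fun A ha => (key A ha).1)
      (fun A ha => (key A ha).2.1)
  have hF'card : ((F'.card : ℕ) : ZMod 2) = 0 := by
    simpa using hsum0
  by_cases hp : ∃ j : ℕ, s = ∑ i ∈ Icc (j+1) (2*j+1), i ∨ s = ∑ i ∈ Icc (j+1) (2*j), i
  · rw [if_pos hp]
    obtain ⟨j, hj⟩ := hp
    have hE : ∃ E : Finset ℕ, Exc E ∧ ∑ i ∈ E, i = s := by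
      rcases hj with hj | hj
      · exact ⟨Icc (j+1) (2*j+1), ⟨j, Or.inl rfl⟩, hj.symm⟩
      · exact ⟨Icc (j+1) (2*j), ⟨j, Or.inr rfl⟩, hj.symm⟩
    obtain ⟨E, hEexc, hEsum⟩ := hE
    have hEsub : E ⊆ Icc 1 N := by
      intro x hx
      have h1x : 1 ≤ x := by
        obtain ⟨i, hi⟩ := hEexc
        rcases hi with rfl | rfl <;> · have := (mem_Icc.1 hx).1; omega
      have hxs : x ≤ s := by
        rw [← hEsum]
        exact Finset.single_le_sum (f := fun i => i) (fun i _ => Nat.zero_le i) hx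
      exact mem_Icc.2 ⟨h1x, le_trans hxs hsN⟩
    have hEF : E ∈ F := (hFmem E).2 ⟨hEsub, hEsum⟩
    have huniq : ∀ A ∈ F, Exc A → A = E := fun A hAF hx =>
      exc_eq_of_sum_eq hx hEexc (by rw [((hFmem A).1 hAF).2, hEsum])
    have hF'eq : F' = F.erase E := by
      ext A
      rw [hF', mem_filter, mem_erase]
      constructor
      · rintro ⟨h1, h2⟩
        exact ⟨fun hEq => h2 (hEq ▸ hEexc), h1⟩
      · rintro ⟨h1, h2⟩
        exact ⟨h2, fun hx => h1 (huniq A h2 hx)⟩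
    have hcard := Finset.card_erase_add_one hEF
    calc ((F.card : ℕ) : ZMod 2) = (((F.erase E).card + 1 : ℕ) : ZMod 2) := by rw [hcard]
      _ = ((F'.card : ℕ) : ZMod 2) + 1 := by rw [hF'eq]; push_cast; ring
      _ = 1 := by rw [hF'card]; ring
  · rw [if_neg hp]
    have hFF : F' = F := by
      rw [hF']
      apply Finset.filter_true_of_mem
      intro A hAF hx
      apply hp
      obtain ⟨i, hi⟩ := hx
      have hsA := ((hFmem A).1 hAF).2
      rcases hi with rfl | rfl
      · exact ⟨i, Or.inl hsA.symm⟩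
      · exact ⟨i, Or.inr hsA.symm⟩
    rw [← hFF]
    exact hF'card


end CMod2

/-- Mod-2 `q`-expansion of `C = η(3τ)^8`: the coefficient of `X^m` (for
`1 ≤ m ≤ 3N`) in `X · ∏_{n=1}^{N} (1 − X^{3n})^{8}` over `ZMod 2` is `1` iff `m`
is the square of an odd natural number not divisible by `3`. -/
theorem c_mod_two_expansion (N : ℕ) (hN : 1 ≤ N) (m : ℕ) (hm1 : 1 ≤ m)
    (hmN : m ≤ 3 * N) :
    (X * ∏ n ∈ Finset.Icc 1 N,
        ((1 : Polynomial (ZMod 2)) - X ^ (3 * n)) ^ 8).coeff m = 1 ↔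
      ∃ k : ℕ, Odd k ∧ ¬ (3 ∣ k) ∧ m = k ^ 2 := by
  classical
  have hprod : (∏ n ∈ Finset.Icc 1 N, ((1 : Polynomial (ZMod 2)) - X ^ (3 * n)) ^ 8)
      = ∑ t ∈ (Finset.Icc 1 N).powerset, (X : Polynomial (ZMod 2)) ^ (24 * ∑ i ∈ t, i) := by
    have h1 : ∀ n ∈ Finset.Icc 1 N,
        ((1 : Polynomial (ZMod 2)) - X ^ (3 * n)) ^ 8 = X ^ (24 * n) + 1 := by
      intro n _
      rw [CMod2.pow8 (3 * n), show 8 * (3 * n) = 24 * n from by ring, add_comm]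
    rw [Finset.prod_congr rfl h1, Finset.prod_add]
    refine Finset.sum_congr rfl fun t _ => ?_
    rw [Finset.prod_const_one, mul_one, Finset.prod_pow_eq_pow_sum, ← Finset.mul_sum]
  obtain ⟨m', rfl⟩ : ∃ m', m = m' + 1 := ⟨m - 1, by omega⟩
  rw [hprod, Polynomial.coeff_X_mul, Polynomial.finset_sum_coeff]
  simp only [Polynomial.coeff_X_pow]
  rw [Finset.sum_boole]
  by_cases h24 : 24 ∣ m'
  · obtain ⟨s, rfl⟩ := h24
    have hflt : Finset.filter (fun t => 24 * s = 24 * ∑ i ∈ t, i) (Finset.Icc 1 N).powerset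
        = Finset.filter (fun t => ∑ i ∈ t, i = s) (Finset.Icc 1 N).powerset :=
      Finset.filter_congr fun t _ => by constructor <;> intro h <;> omega
    rw [hflt, CMod2.parity N s (by omega)]
    split_ifs with hpent
    · constructor
      · intro _
        obtain ⟨j, hj | hj⟩ := hpent
        · refine ⟨6 * j + 5, by rw [Nat.odd_iff]; omega, by omega, ?_⟩
          have e := CMod2.sumE1 j
          omega
        · refine ⟨6 * j + 1, by rw [Nat.odd_iff]; omega, by omega, ?_⟩
          have e := CMod2.sumE2 j
          omega
      · intro _; rfl
    · constructor
      · intro h; exact absurd h (by decide)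
      · rintro ⟨k, hodd, h3, hk⟩
        exfalso
        apply hpent
        rw [Nat.odd_iff] at hodd
        have h6 : k % 6 = 1 ∨ k % 6 = 5 := by omega
        rcases h6 with h6 | h6
        · obtain ⟨j, rfl⟩ : ∃ j, k = 6 * j + 1 := ⟨k / 6, by omega⟩
          have e := CMod2.sumE2 j
          exact ⟨j, Or.inr (by omega)⟩
        · obtain ⟨j, rfl⟩ : ∃ j, k = 6 * j + 5 := ⟨k / 6, by omega⟩
          have e := CMod2.sumE1 j
          exact ⟨j, Or.inl (by omega)⟩
  · have hempty : Finset.filter (fun t => m' = 24 * ∑ i ∈ t, i) (Finset.Icc 1 N).powerset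
        = ∅ := by
      rw [Finset.filter_eq_empty_iff]
      intro t _ h
      exact h24 ⟨∑ i ∈ t, i, h⟩
    rw [hempty]
    simp only [Finset.card_empty, Nat.cast_zero]
    constructor
    · intro h; exact absurd h (by decide)
    · rintro ⟨k, hodd, h3, hk⟩
      exfalso
      apply h24
      rw [Nat.odd_iff] at hodd
      have h6 : k % 6 = 1 ∨ k % 6 = 5 := by omega
      rcases h6 with h6 | h6
      · obtain ⟨j, rfl⟩ : ∃ j, k = 6 * j + 1 := ⟨k / 6, by omega⟩
        have e := CMod2.sumE2 j
        exact ⟨∑ i ∈ Finset.Icc (j+1) (2*j), i, by omega⟩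
      · obtain ⟨j, rfl⟩ : ∃ j, k = 6 * j + 5 := ⟨k / 6, by omega⟩
        have e := CMod2.sumE1 j
        exact ⟨∑ i ∈ Finset.Icc (j+1) (2*j+1), i, by omega⟩
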